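/- Let ε : ℕ → {-1, +1} take the value +1 for infinitely many indices and the value -1 for infinitely many indices. Then every integer n has a unique representation as a finite subset sum of the set {ε(i)·2^i : i ∈ ℕ}: there is exactly one finite set S ⊆ ℕ with Σ_{i∈S} ε(i)·2^i = n. -/
import Mathlib

private lemma geom2 (k : ℕ) : ∑ j ∈ Finset.range k, (2:ℤ) ^ j = 2 ^ k - 1 := by
  induction k with
  | zero => simp
  | succ k ih => rw [Finset.sum_range_succ, ih]; ring

private lemma shift_inf {p : ℕ → Prop} (h : {i | p i}.Infinite) :
    {i | p (i + 1)}.Infinite := by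
  by_contra hfin
  rw [Set.not_infinite] at hfin
  apply h
  have : {i | p i} ⊆ insert 0 ((· + 1) '' {i | p (i + 1)}) := by
    intro i hi
    cases i with
    | zero => exact Set.mem_insert _ _
    | succ j => exact Set.mem_insert_of_mem _ ⟨j, hi, rfl⟩
  exact Set.Finite.subset ((hfin.image _).insert 0) this

private lemma exist_aux : ∀ N : ℕ, ∀ ε : ℕ → ℤ, (∀ i, ε i = 1 ∨ ε i = -1) →
    {i : ℕ | ε i = 1}.Infinite → {i : ℕ | ε i = -1}.Infinite →
    ∀ n : ℤ, n.natAbs ≤ N → ∃ S : Finset ℕ, ∑ i ∈ S, ε i * 2 ^ i = n := by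
  intro N
  induction N with
  | zero =>
    intro ε hval hpos hneg n hn
    have : n = 0 := by omega
    exact ⟨∅, by simp [this]⟩
  | succ N ih =>
    intro ε hval hpos hneg n hn
    rcases eq_or_ne n 0 with rfl | hn0
    · exact ⟨∅, by simp⟩
    rcases eq_or_ne n 1 with rfl | hn1
    · -- use least index with ε i = 1
      have hne : ∃ i, ε i = 1 := hpos.nonempty
      set i0 := Nat.find hne with hi0
      refine ⟨Finset.range (i0 + 1), ?_⟩
      rw [Finset.sum_range_succ]
      have h1 : ε i0 = 1 := Nat.find_spec hne
      have h2 : ∀ j ∈ Finset.range i0, ε j * 2 ^ j = (-1) * 2 ^ j := by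
        intro j hj
        rw [Finset.mem_range] at hj
        have := Nat.find_min hne hj
        rcases hval j with h | h
        · exact absurd h this
        · rw [h]
      rw [Finset.sum_congr rfl h2, h1]
      have : ∑ j ∈ Finset.range i0, (-1 : ℤ) * 2 ^ j
          = -(∑ j ∈ Finset.range i0, (2:ℤ) ^ j) := by
        rw [← Finset.sum_neg_distrib]; exact Finset.sum_congr rfl (by intros; ring)
      rw [this, geom2]; ring
    rcases eq_or_ne n (-1) with rfl | hn2
    · have hne : ∃ i, ε i = -1 := hneg.nonempty
      set i0 := Nat.find hne with hi0
      refine ⟨Finset.range (i0 + 1), ?_⟩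
      rw [Finset.sum_range_succ]
      have h1 : ε i0 = -1 := Nat.find_spec hne
      have h2 : ∀ j ∈ Finset.range i0, ε j * 2 ^ j = (1 : ℤ) * 2 ^ j := by
        intro j hj
        rw [Finset.mem_range] at hj
        have := Nat.find_min hne hj
        rcases hval j with h | h
        · rw [h]
        · exact absurd h this
      rw [Finset.sum_congr rfl h2, h1]
      simp only [one_mul]
      rw [geom2]; ring
    -- now |n| ≥ 2
    have habs : 2 ≤ n.natAbs := by omega
    have hN1 : 1 ≤ N := by omega
    set ε' : ℕ → ℤ := fun j => ε (j + 1) with hε'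
    have hval' : ∀ i, ε' i = 1 ∨ ε' i = -1 := fun i => hval (i + 1)
    have hpos' : {i : ℕ | ε' i = 1}.Infinite := shift_inf hpos
    have hneg' : {i : ℕ | ε' i = -1}.Infinite := shift_inf hneg
    by_cases hev : Even n
    · obtain ⟨m, hm⟩ := hev
      have hm2 : n = 2 * m := by omega
      have hmb : m.natAbs ≤ N := by
        have : n.natAbs = 2 * m.natAbs := by rw [hm2, Int.natAbs_mul]; rfl
        omega
      obtain ⟨S', hS'⟩ := ih ε' hval' hpos' hneg' m hmb
      refine ⟨S'.map ⟨Nat.succ, Nat.succ_injective⟩, ?_⟩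
      rw [Finset.sum_map]
      have : ∀ j ∈ S', ε (Function.Embedding.mk Nat.succ Nat.succ_injective j) *
          2 ^ (Function.Embedding.mk Nat.succ Nat.succ_injective j)
          = 2 * (ε' j * 2 ^ j) := by
        intro j _
        simp only [Function.Embedding.coeFn_mk, hε', Nat.succ_eq_add_one]
        ring
      rw [Finset.sum_congr rfl this, ← Finset.mul_sum, hS', hm2]
    · -- n odd
      have hodd : Odd n := Int.not_even_iff_odd.mp hev
      have hε0 : ε 0 = 1 ∨ ε 0 = -1 := hval 0
      have heven : Even (n - ε 0) := by
        rcases hodd with ⟨k, hk⟩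
        rcases hε0 with h | h
        · exact ⟨k, by omega⟩
        · exact ⟨k + 1, by omega⟩
      obtain ⟨m, hm⟩ := heven
      have hm2 : n - ε 0 = 2 * m := by omega
      have hnodd : Odd n.natAbs := by rwa [Int.natAbs_odd]
      have habs3 : 3 ≤ n.natAbs := by
        rcases hnodd with ⟨k, hk⟩; omega
      have hN2 : 2 ≤ N := by omega
      have hmb : m.natAbs ≤ N := by
        have h1 : (n - ε 0).natAbs ≤ n.natAbs + (ε 0).natAbs := Int.natAbs_sub_le n (ε 0)
        have h2 : (ε 0).natAbs = 1 := by rcases hε0 with h | h <;> simp [h]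
        have h3 : (n - ε 0).natAbs = 2 * m.natAbs := by rw [hm2, Int.natAbs_mul]; rfl
        omega
      obtain ⟨S', hS'⟩ := ih ε' hval' hpos' hneg' m hmb
      have h0 : (0 : ℕ) ∉ S'.map ⟨Nat.succ, Nat.succ_injective⟩ := by
        simp [Finset.mem_map]
      refine ⟨insert 0 (S'.map ⟨Nat.succ, Nat.succ_injective⟩), ?_⟩
      rw [Finset.sum_insert h0, Finset.sum_map]
      have : ∀ j ∈ S', ε (Function.Embedding.mk Nat.succ Nat.succ_injective j) *
          2 ^ (Function.Embedding.mk Nat.succ Nat.succ_injective j)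
          = 2 * (ε' j * 2 ^ j) := by
        intro j _
        simp only [Function.Embedding.coeFn_mk, hε', Nat.succ_eq_add_one]
        ring
      rw [Finset.sum_congr rfl this, ← Finset.mul_sum, hS']
      rw [pow_zero, mul_one]
      omega

private lemma uniq_aux (ε : ℕ → ℤ) (hval : ∀ i, ε i = 1 ∨ ε i = -1)
    (S T : Finset ℕ) (h : ∑ i ∈ S, ε i * 2 ^ i = ∑ i ∈ T, ε i * 2 ^ i)
    (m : ℕ) (hmS : m ∈ S) (hmT : m ∉ T)
    (hmin : ∀ i, ¬ (i ∈ S ↔ i ∈ T) → m ≤ i) : False := by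
  have key : ∑ i ∈ S \ T, ε i * 2 ^ i = ∑ i ∈ T \ S, ε i * 2 ^ i := by
    have h1 := Finset.sum_inter_add_sum_sdiff S T (fun i => ε i * 2 ^ i)
    have h2 := Finset.sum_inter_add_sum_sdiff T S (fun i => ε i * 2 ^ i)
    rw [Finset.inter_comm] at h2
    omega
  have hmST : m ∈ S \ T := Finset.mem_sdiff.mpr ⟨hmS, hmT⟩
  have key2 : ε m * 2 ^ m = ∑ i ∈ T \ S, ε i * 2 ^ i
      - ∑ i ∈ (S \ T).erase m, ε i * 2 ^ i := by
    rw [← Finset.add_sum_erase _ _ hmST] at key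
    omega
  have hdvd : (2 : ℤ) ^ (m + 1) ∣ ε m * 2 ^ m := by
    rw [key2]
    apply dvd_sub
    · apply Finset.dvd_sum
      intro i hi
      rw [Finset.mem_sdiff] at hi
      have hne' : i ≠ m := fun h => hi.2 (h ▸ hmS)
      have hle : m ≤ i := hmin i (by tauto)
      have hgt : m + 1 ≤ i := by omega
      exact Dvd.dvd.mul_left (pow_dvd_pow 2 hgt) _
    · apply Finset.dvd_sum
      intro i hi
      rw [Finset.mem_erase, Finset.mem_sdiff] at hi
      have hle : m ≤ i := hmin i (by tauto)
      have hgt : m + 1 ≤ i := by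
        rcases hi with ⟨h1, _, _⟩; omega
      exact Dvd.dvd.mul_left (pow_dvd_pow 2 hgt) _
  have hdvd2 : (2 : ℤ) ^ (m + 1) ∣ 2 ^ m := by
    rcases hval m with h' | h'
    · rwa [h', one_mul] at hdvd
    · rw [h', neg_one_mul, dvd_neg] at hdvd; exact hdvd
  have h1 : (2 : ℤ) ^ (m + 1) ≤ 2 ^ m :=
    Int.le_of_dvd (pow_pos (by norm_num) m) hdvd2
  have h2 : (0 : ℤ) < 2 ^ m := pow_pos (by norm_num) m
  rw [pow_succ] at h1
  linarith

/-- Let `ε : ℕ → {-1, +1}` take the value `+1` infinitely often and the value `-1`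
infinitely often. Then every integer `n` has a unique representation as a finite subset sum
of the set `{ε(i)·2^i : i ∈ ℕ}`. -/
theorem stmt_12 (ε : ℕ → ℤ) (hval : ∀ i, ε i = 1 ∨ ε i = -1)
    (hpos : {i : ℕ | ε i = 1}.Infinite) (hneg : {i : ℕ | ε i = -1}.Infinite) (n : ℤ) :
    ∃! S : Finset ℕ, ∑ i ∈ S, ε i * 2 ^ i = n := by
  obtain ⟨S, hS⟩ := exist_aux n.natAbs ε hval hpos hneg n le_rfl
  refine ⟨S, hS, ?_⟩
  intro T hT
  by_contra hne
  have hD : ((T \ S) ∪ (S \ T)).Nonempty := by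
    rw [Finset.nonempty_iff_ne_empty]
    intro h
    rw [Finset.union_eq_empty, Finset.sdiff_eq_empty_iff_subset,
      Finset.sdiff_eq_empty_iff_subset] at h
    exact hne (le_antisymm h.1 h.2)
  set D := (T \ S) ∪ (S \ T) with hDdef
  have hmem := D.min'_mem hD
  set m := D.min' hD with hm
  have hmin : ∀ i, ¬ (i ∈ T ↔ i ∈ S) → m ≤ i := by
    intro i hi
    apply D.min'_le
    rw [hDdef, Finset.mem_union, Finset.mem_sdiff, Finset.mem_sdiff]
    tauto
  rw [hDdef, Finset.mem_union, Finset.mem_sdiff, Finset.mem_sdiff] at hmem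
  rcases hmem with ⟨h1, h2⟩ | ⟨h1, h2⟩
  · exact uniq_aux ε hval T S (hT.trans hS.symm) m h1 h2 hmin
  · exact uniq_aux ε hval S T (hS.trans hT.symm) m h1 h2
      (fun i hi => hmin i (fun h => hi (Iff.symm h)))
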